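/- arXiv:1811.08776 — 2 statements merged into one kernel-verified Lean document; each statement's English description precedes it below -/
import Mathlib

section
/- Let T be a tree of odd order n with Randić matrix R. Assuming R_{−1}(T) ≤ (5n+8)/18, that ±1 are eigenvalues of R, and that the nullity of R is at least 1, then RE(T) ≤ √((n−3)·(5n−10)/9) + 2. -/
open scoped Classical

noncomputable def randicMatrix {V : Type*} [Fintype V] (G : SimpleGraph V)
    [DecidableRel G.Adj] : Matrix V V ℝ :=
  fun u v =>
    if G.Adj u v then 1 / Real.sqrt ((G.degree u : ℝ) * (G.degree v : ℝ)) else 0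

noncomputable def randicIndex {V : Type*} [Fintype V] (G : SimpleGraph V)
    [DecidableRel G.Adj] : ℝ :=
  (1 / 2) * ∑ u, ∑ v, if G.Adj u v then 1 / ((G.degree u : ℝ) * (G.degree v : ℝ)) else 0

open Matrix in
lemma sum_sq_eigenvalues {V : Type*} [Fintype V] [DecidableEq V] {A : Matrix V V ℝ}
    (hA : A.IsHermitian) : ∑ i, hA.eigenvalues i ^ 2 = (A * A).trace := by
  conv_rhs => rw [hA.spectral_theorem, Unitary.conjStarAlgAut_apply]
  set U : Matrix V V ℝ := (hA.eigenvectorUnitary : Matrix V V ℝ)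
  set D : Matrix V V ℝ := diagonal (RCLike.ofReal ∘ hA.eigenvalues)
  have hU1 : U * star U = 1 := (Matrix.mem_unitaryGroup_iff).mp (hA.eigenvectorUnitary).2
  have hU2 : star U * U = 1 := (Matrix.mem_unitaryGroup_iff').mp (hA.eigenvectorUnitary).2
  have key : (U * D * star U) * (U * D * star U) = U * (D * D) * star U := by
    simp only [mul_assoc]
    rw [← mul_assoc (star U) U, hU2, one_mul]
  rw [key, Matrix.trace_mul_cycle, ← mul_assoc, hU2, one_mul]
  simp [D, diagonal_mul_diagonal, Matrix.trace_diagonal, sq]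

lemma trace_randic_sq {V : Type*} [Fintype V] [DecidableEq V] (G : SimpleGraph V)
    [DecidableRel G.Adj] :
    (randicMatrix G * randicMatrix G).trace = 2 * randicIndex G := by
  have h : ∀ u v, randicMatrix G u v * randicMatrix G v u =
      if G.Adj u v then 1 / ((G.degree u : ℝ) * (G.degree v : ℝ)) else 0 := by
    intro u v
    by_cases h : G.Adj u v
    · have h1 : 0 < G.degree u := (G.degree_pos_iff_exists_adj u).2 ⟨v, h⟩
      have h2 : 0 < G.degree v := (G.degree_pos_iff_exists_adj v).2 ⟨u, h.symm⟩
      have hd : (0:ℝ) < (G.degree u : ℝ) * (G.degree v : ℝ) := by positivity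
      have hcomm : (G.degree v : ℝ) * (G.degree u : ℝ) = (G.degree u : ℝ) * (G.degree v : ℝ) :=
        mul_comm _ _
      simp only [randicMatrix, if_pos h, if_pos h.symm, hcomm]
      rw [div_mul_div_comm, one_mul, Real.mul_self_sqrt hd.le]
    · have h' : ¬ G.Adj v u := fun h' => h h'.symm
      simp [randicMatrix, h, h']
  simp only [Matrix.trace, Matrix.diag, Matrix.mul_apply, h, randicIndex]
  ring

theorem randic_energy_bound_tree_odd {V : Type*} [Fintype V]
    (G : SimpleGraph V) [DecidableRel G.Adj] (n : ℕ)
    (hn : Fintype.card V = n) (hodd : Odd n)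
    (htree : G.IsTree)
    (hR : (randicMatrix G).IsHermitian)
    (hRI : randicIndex G ≤ (5 * (n : ℝ) + 8) / 18)
    (h1 : ∃ i, hR.eigenvalues i = 1) (hneg1 : ∃ i, hR.eigenvalues i = -1)
    (hnull : 1 ≤ (Finset.univ.filter fun i => hR.eigenvalues i = 0).card) :
    ∑ i, |hR.eigenvalues i| ≤
      Real.sqrt (((n : ℝ) - 3) * (5 * (n : ℝ) - 10) / 9) + 2 := by
  classical
  set lam := hR.eigenvalues with hlam
  obtain ⟨i, hi⟩ := h1
  obtain ⟨j, hj⟩ := hneg1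
  obtain ⟨k, hkmem⟩ := Finset.card_pos.mp (lt_of_lt_of_le one_pos hnull)
  have hk : lam k = 0 := (Finset.mem_filter.mp hkmem).2
  have hij : i ≠ j := fun h => by rw [h, hj] at hi; norm_num at hi
  have hik : i ≠ k := fun h => by rw [h, hk] at hi; norm_num at hi
  have hjk : j ≠ k := fun h => by rw [h, hk] at hj; norm_num at hj
  set t : Finset V := {i, j, k} with ht
  have hcard_t : t.card = 3 := by
    rw [ht, Finset.card_insert_of_notMem (by simp [hij, hik]),
      Finset.card_insert_of_notMem (by simp [hjk]), Finset.card_singleton]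
  have h3n : 3 ≤ n := by
    rw [← hcard_t, ← hn]; exact Finset.card_le_univ t
  set s : Finset V := Finset.univ \ t with hs
  have hcard_s : s.card = n - 3 := by
    rw [hs, Finset.card_sdiff_of_subset (Finset.subset_univ t), Finset.card_univ, hn, hcard_t]
  have hcast_s : (s.card : ℝ) = (n : ℝ) - 3 := by
    rw [hcard_s, Nat.cast_sub h3n]; norm_num
  have hsum_t : ∀ f : V → ℝ, ∑ x ∈ t, f x = f i + f j + f k := by
    intro f
    rw [ht, Finset.sum_insert (by simp [hij, hik]), Finset.sum_insert (by simp [hjk]),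
      Finset.sum_singleton]; ring
  have hsplit : ∀ f : V → ℝ, ∑ x, f x = ∑ x ∈ s, f x + ∑ x ∈ t, f x := by
    intro f; rw [hs]; exact (Finset.sum_sdiff (Finset.subset_univ t)).symm
  have hS : ∑ x, lam x ^ 2 = 2 * randicIndex G := by
    rw [hlam, sum_sq_eigenvalues hR, trace_randic_sq]
  have hSle : ∑ x, lam x ^ 2 ≤ (5 * (n : ℝ) + 8) / 9 := by
    rw [hS]; linarith
  have hsq_s : ∑ x ∈ s, lam x ^ 2 ≤ (5 * (n : ℝ) - 10) / 9 := by
    have := hsplit (fun x => lam x ^ 2)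
    rw [hsum_t (fun x => lam x ^ 2), hi, hj, hk] at this
    nlinarith [hSle]
  have habs : ∑ x ∈ s, |lam x| ≤ Real.sqrt (((n : ℝ) - 3) * (5 * (n : ℝ) - 10) / 9) := by
    apply Real.le_sqrt_of_sq_le
    calc (∑ x ∈ s, |lam x|) ^ 2 ≤ s.card * ∑ x ∈ s, |lam x| ^ 2 :=
          sq_sum_le_card_mul_sum_sq
      _ = ((n : ℝ) - 3) * ∑ x ∈ s, lam x ^ 2 := by
          rw [hcast_s]; congr 1; exact Finset.sum_congr rfl fun x _ => sq_abs _
      _ ≤ ((n : ℝ) - 3) * ((5 * (n : ℝ) - 10) / 9) := by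
          apply mul_le_mul_of_nonneg_left hsq_s
          have : (3 : ℝ) ≤ (n : ℝ) := by exact_mod_cast h3n
          linarith
      _ = ((n : ℝ) - 3) * (5 * (n : ℝ) - 10) / 9 := by ring
  have := hsplit (fun x => |lam x|)
  rw [hsum_t (fun x => |lam x|), hi, hj, hk] at this
  simp only [abs_one, abs_neg, abs_zero] at this
  rw [this]
  linarith [habs]
end

section
/- Let G be a connected TB graph on n ≥ 3 vertices (bipartite with parts A, B, each vertex of B of degree 1 or 2) whose Randić matrix has nullity at least 1. Then RE(G) ≤ (n−3)·(√2)/2 + 2. -/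
open scoped Classical

lemma trace_sq_eq_sum_eigen {m : Type*} [Fintype m] [DecidableEq m]
    {M : Matrix m m ℝ} (hM : M.IsHermitian) :
    (M * M).trace = ∑ i, hM.eigenvalues i ^ 2 := by
  set U : Matrix m m ℝ := (hM.eigenvectorUnitary : Matrix m m ℝ)
  set D : Matrix m m ℝ := Matrix.diagonal (RCLike.ofReal ∘ hM.eigenvalues)
  have hU : star U * U = 1 := by
    exact Matrix.mem_unitaryGroup_iff'.mp hM.eigenvectorUnitary.2
  have h1 : M = U * D * star U := hM.spectral_theorem
  have h2 : M * M = U * (D * D) * star U := by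
    rw [h1]; rw [show U * D * star U * (U * D * star U) = U * (D * (star U * U) * D) * star U by
      noncomm_ring]
    rw [hU]; noncomm_ring
  rw [h2, Matrix.trace_mul_cycle, ← Matrix.mul_assoc, hU, Matrix.one_mul]
  rw [show D * D = Matrix.diagonal ((RCLike.ofReal ∘ hM.eigenvalues) * (RCLike.ofReal ∘ hM.eigenvalues)) from Matrix.diagonal_mul_diagonal _ _]
  rw [Matrix.trace_diagonal]
  simp [pow_two]

-- eigenvalue from eigenvector
lemma exists_eigenvalue_eq {m : Type*} [Fintype m] [DecidableEq m]
    {M : Matrix m m ℝ} (hM : M.IsHermitian) {c : ℝ} {x : m → ℝ} (hx : x ≠ 0)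
    (hMx : Matrix.mulVec M x = c • x) : ∃ i, hM.eigenvalues i = c := by
  have h1 : Module.End.HasEigenvalue (Matrix.toLin' M) c := by
    apply Module.End.hasEigenvalue_of_hasEigenvector (x := x)
    refine ⟨?_, hx⟩
    rw [Module.End.mem_eigenspace_iff, Matrix.toLin'_apply, hMx]
  have h2 : c ∈ spectrum ℝ (Matrix.toLin' M) := h1.mem_spectrum
  have h3 : spectrum ℝ (Matrix.toLin' M) = spectrum ℝ M := by
    rw [← Matrix.toLin_eq_toLin']
    exact AlgEquiv.spectrum_eq (Matrix.toLinAlgEquiv (Pi.basisFun ℝ m)) M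
  rw [h3, hM.spectrum_real_eq_range_eigenvalues] at h2
  exact h2
open scoped Classical
open Finset

lemma exists_adj_of_connected {V : Type*} [Fintype V] (G : SimpleGraph V)
    (h : G.Connected) (hcard : 2 ≤ Fintype.card V) (v : V) : ∃ w, G.Adj v w := by
  obtain ⟨w, hw⟩ := Fintype.exists_ne_of_one_lt_card (by omega) v
  obtain ⟨p⟩ := h.preconnected v w
  cases p with
  | nil => exact absurd rfl (Ne.symm hw)
  | cons hadj q => exact ⟨_, hadj⟩

lemma walk_closed {V : Type*} (G : SimpleGraph V) {v w : V}
    (hv : ∀ u, G.Adj v u → u = w) (hw : ∀ u, G.Adj w u → u = v) :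
    ∀ {s t : V} (_ : G.Walk s t), (s = v ∨ s = w) → (t = v ∨ t = w) := by
  intro s t p
  induction p with
  | nil => exact id
  | cons hadj q ih =>
    rename_i a b c
    intro hs
    apply ih
    rcases hs with rfl | rfl
    · right; exact hv _ hadj
    · left; exact hw _ hadj

lemma no_K2 {V : Type*} [Fintype V] (G : SimpleGraph V) [DecidableRel G.Adj]
    (h : G.Connected) (h3 : 3 ≤ Fintype.card V) {v w : V} (hadj : G.Adj v w)
    (hv : G.degree v = 1) (hw : G.degree w = 1) : False := by
  have hvn : G.neighborFinset v = {w} := by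
    apply Finset.eq_singleton_iff_unique_mem.mpr
    refine ⟨by rwa [SimpleGraph.mem_neighborFinset], ?_⟩
    intro u hu
    have := Finset.card_le_one.mp (le_of_eq hv)
    exact this u hu w (by rwa [SimpleGraph.mem_neighborFinset])
  have hwn : G.neighborFinset w = {v} := by
    apply Finset.eq_singleton_iff_unique_mem.mpr
    refine ⟨by rw [SimpleGraph.mem_neighborFinset]; exact hadj.symm, ?_⟩
    intro u hu
    have := Finset.card_le_one.mp (le_of_eq hw)
    exact this u hu v (by rw [SimpleGraph.mem_neighborFinset]; exact hadj.symm)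
  have hv' : ∀ u, G.Adj v u → u = w := by
    intro u hu
    have : u ∈ G.neighborFinset v := by rwa [SimpleGraph.mem_neighborFinset]
    rw [hvn, Finset.mem_singleton] at this; exact this
  have hw' : ∀ u, G.Adj w u → u = v := by
    intro u hu
    have : u ∈ G.neighborFinset w := by rwa [SimpleGraph.mem_neighborFinset]
    rw [hwn, Finset.mem_singleton] at this; exact this
  have hns : ¬ (Finset.univ : Finset V) ⊆ {v, w} := by
    intro hsub
    have h1 := Finset.card_le_card hsub
    have h2 : ({v, w} : Finset V).card ≤ 2 := Finset.card_le_two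
    rw [Finset.card_univ] at h1
    omega
  obtain ⟨z, _, hz⟩ := Finset.not_subset.mp hns
  obtain ⟨p⟩ := h.preconnected v z
  have := walk_closed G hv' hw' p (Or.inl rfl)
  rcases this with rfl | rfl
  · exact hz (by simp)
  · exact hz (by simp)

lemma card_le_card_edgeFinset_add_one {V : Type*} [Fintype V] [DecidableEq V]
    (G : SimpleGraph V) [DecidableRel G.Adj] (h : G.Connected) :
    Fintype.card V ≤ G.edgeFinset.card + 1 := by
  obtain ⟨r⟩ := h.nonempty
  have key : ∀ v : V, ∃ w, v ≠ r → (G.Adj v w ∧ G.dist w r < G.dist v r) := by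
    intro v
    by_cases hv : v = r
    · exact ⟨v, fun h => absurd hv h⟩
    obtain ⟨p, hp⟩ := (h.preconnected v r).exists_walk_length_eq_dist
    cases p with
    | nil => exact absurd rfl hv
    | cons hadj q =>
      rename_i u
      refine ⟨u, fun _ => ⟨hadj, ?_⟩⟩
      have h1 : G.dist u r ≤ q.length := SimpleGraph.dist_le q
      have h2 : q.length + 1 = G.dist v r := by simpa using hp
      omega
  choose f hf using key
  have hmaps : ∀ v ∈ Finset.univ.erase r, s(v, f v) ∈ G.edgeFinset := by
    intro v hv
    rw [SimpleGraph.mem_edgeFinset, SimpleGraph.mem_edgeSet]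
    exact (hf v (Finset.ne_of_mem_erase hv)).1
  have hinj : ∀ v ∈ Finset.univ.erase r, ∀ v' ∈ Finset.univ.erase r,
      s(v, f v) = s(v', f v') → v = v' := by
    intro v hv v' hv' heq
    rw [Sym2.eq_iff] at heq
    rcases heq with ⟨rfl, _⟩ | ⟨h1, h2⟩
    · rfl
    · exfalso
      have d1 := (hf v (Finset.ne_of_mem_erase hv)).2
      have d2 := (hf v' (Finset.ne_of_mem_erase hv')).2
      rw [← h1, ← h2] at d2
      omega
  have := Finset.card_le_card_of_injOn _ hmaps hinj
  simp only [Finset.card_erase_of_mem (Finset.mem_univ r), Finset.card_univ] at this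
  omega

lemma sum_ite_adj {V : Type*} [Fintype V] (G : SimpleGraph V) [DecidableRel G.Adj]
    (v : V) (c : ℝ) : ∑ u, (if G.Adj v u then c else 0) = (G.degree v : ℝ) * c := by
  rw [← Finset.sum_filter, ← SimpleGraph.neighborFinset_eq_filter, Finset.sum_const,
    nsmul_eq_mul]
  rfl

lemma randic_entry_mul {V : Type*} [Fintype V] (G : SimpleGraph V) [DecidableRel G.Adj]
    (hdeg : ∀ v, 0 < G.degree v) {v u : V} (h : G.Adj v u) :
    randicMatrix G v u * Real.sqrt (G.degree u) = 1 / Real.sqrt (G.degree v) := by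
  have hdv : (0:ℝ) < G.degree v := by exact_mod_cast hdeg v
  have hdu : (0:ℝ) < G.degree u := by exact_mod_cast hdeg u
  have h1 : Real.sqrt (G.degree u) ≠ 0 := by positivity
  have h2 : Real.sqrt (G.degree v) ≠ 0 := by positivity
  simp only [randicMatrix, if_pos h]
  rw [Real.sqrt_mul (le_of_lt hdv)]
  field_simp

lemma randic_mulVec_one {V : Type*} [Fintype V] (G : SimpleGraph V) [DecidableRel G.Adj]
    (hdeg : ∀ v, 0 < G.degree v) :
    Matrix.mulVec (randicMatrix G) (fun v => Real.sqrt (G.degree v))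
      = (1:ℝ) • (fun v => Real.sqrt (G.degree v)) := by
  funext v
  have hdv : (0:ℝ) < G.degree v := by exact_mod_cast hdeg v
  simp only [Matrix.mulVec, dotProduct, Pi.smul_apply, smul_eq_mul, one_mul]
  calc ∑ u, randicMatrix G v u * Real.sqrt (G.degree u)
      = ∑ u, (if G.Adj v u then 1 / Real.sqrt (G.degree v) else 0) := by
        apply Finset.sum_congr rfl
        intro u _
        by_cases h : G.Adj v u
        · rw [if_pos h, randic_entry_mul G hdeg h]
        · simp [randicMatrix, if_neg h]
    _ = (G.degree v : ℝ) * (1 / Real.sqrt (G.degree v)) := sum_ite_adj G v _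
    _ = Real.sqrt (G.degree v) := by
        rw [mul_one_div, Real.div_sqrt]

lemma randic_mulVec_neg_one {A B : Type*} [Fintype A] [Fintype B]
    (G : SimpleGraph (A ⊕ B)) [DecidableRel G.Adj]
    (hA : ∀ a a' : A, ¬ G.Adj (Sum.inl a) (Sum.inl a'))
    (hB : ∀ b b' : B, ¬ G.Adj (Sum.inr b) (Sum.inr b'))
    (hdeg : ∀ v, 0 < G.degree v) :
    Matrix.mulVec (randicMatrix G)
        (Sum.elim (fun a => Real.sqrt (G.degree (Sum.inl a)))
                  (fun b => - Real.sqrt (G.degree (Sum.inr b))))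
      = (-1:ℝ) • (Sum.elim (fun a => Real.sqrt (G.degree (Sum.inl a)))
                  (fun b => - Real.sqrt (G.degree (Sum.inr b)))) := by
  funext v
  simp only [Matrix.mulVec, dotProduct, Pi.smul_apply, smul_eq_mul]
  cases v with
  | inl a =>
    have key : ∀ u, randicMatrix G (Sum.inl a) u *
        (Sum.elim (fun a => Real.sqrt (G.degree (Sum.inl a)))
                  (fun b => - Real.sqrt (G.degree (Sum.inr b))) u)
        = (if G.Adj (Sum.inl a) u then -(1 / Real.sqrt (G.degree (Sum.inl a))) else 0) := by
      intro u
      by_cases h : G.Adj (Sum.inl a) u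
      · rw [if_pos h]
        cases u with
        | inl a' => exact absurd h (hA a a')
        | inr b =>
          simp only [Sum.elim_inr, mul_neg]
          rw [randic_entry_mul G hdeg h]
      · simp [randicMatrix, if_neg h]
    rw [Finset.sum_congr rfl (fun u _ => key u), sum_ite_adj]
    simp only [Sum.elim_inl]
    rw [mul_neg, mul_one_div, Real.div_sqrt]
    ring
  | inr b =>
    have key : ∀ u, randicMatrix G (Sum.inr b) u *
        (Sum.elim (fun a => Real.sqrt (G.degree (Sum.inl a)))
                  (fun b => - Real.sqrt (G.degree (Sum.inr b))) u)
        = (if G.Adj (Sum.inr b) u then (1 / Real.sqrt (G.degree (Sum.inr b))) else 0) := by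
      intro u
      by_cases h : G.Adj (Sum.inr b) u
      · rw [if_pos h]
        cases u with
        | inr b' => exact absurd h (hB b b')
        | inl a =>
          simp only [Sum.elim_inl]
          rw [randic_entry_mul G hdeg h]
      · simp [randicMatrix, if_neg h]
    rw [Finset.sum_congr rfl (fun u _ => key u), sum_ite_adj]
    simp only [Sum.elim_inr]
    rw [mul_one_div, Real.div_sqrt]
    ring
lemma sum_ite_count {β : Type*} [Fintype β] (P : β → Prop) [DecidablePred P] (c : ℝ) :
    ∑ b, (if P b then c else 0) = ((∑ b, if P b then 1 else 0 : ℕ) : ℝ) * c := by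
  push_cast
  rw [Finset.sum_mul]
  apply Finset.sum_congr rfl
  intro b _
  by_cases h : P b <;> simp [h]

lemma nat_arith_aux (x y : ℕ) (hxy : ¬(x = 1 ∧ y = 0)) :
    4 * x + 2 * y ≤ (2 + x) * (x + y) := by
  rcases Nat.lt_or_ge x 2 with hx | hx
  · have h01 : x = 0 ∨ x = 1 := by omega
    rcases h01 with h | h
    · subst h; nlinarith
    · subst h
      have hy : 1 ≤ y := Nat.pos_of_ne_zero (fun h0 => hxy ⟨rfl, h0⟩)
      nlinarith
  · nlinarith

lemma real_arith_aux (x y : ℝ) (hd : 0 < x + y)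
    (hkey : 4 * x + 2 * y ≤ (2 + x) * (x + y)) :
    x * (1 / (x + y)) + y * (1 / (2 * (x + y))) ≤ (2 + x) / 4 := by
  have e1 : x * (1 / (x + y)) + y * (1 / (2 * (x + y))) = (2 * x + y) / (2 * (x + y)) := by
    field_simp
  rw [e1, div_le_div_iff₀ (by positivity) (by norm_num : (0:ℝ) < 4)]
  nlinarith [hkey]

lemma randic_trace_bound {A B : Type*} [Fintype A] [Fintype B]
    (G : SimpleGraph (A ⊕ B)) [DecidableRel G.Adj] (n : ℕ)
    (hn : Fintype.card (A ⊕ B) = n) (hn3 : 3 ≤ n)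
    (hconn : G.Connected)
    (hA : ∀ a a' : A, ¬ G.Adj (Sum.inl a) (Sum.inl a'))
    (hB : ∀ b b' : B, ¬ G.Adj (Sum.inr b) (Sum.inr b'))
    (hdegB : ∀ b : B, G.degree (Sum.inr b) = 1 ∨ G.degree (Sum.inr b) = 2) :
    (randicMatrix G * randicMatrix G).trace ≤ ((n : ℝ) + 1) / 2 := by
  classical
  have hcard2 : 2 ≤ Fintype.card (A ⊕ B) := by omega
  have hdeg : ∀ v, 0 < G.degree v := by
    intro v
    rw [SimpleGraph.degree_pos_iff_exists_adj]
    exact exists_adj_of_connected G hconn hcard2 v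
  set d : A ⊕ B → ℕ := fun v => G.degree v with hd
  set F : A ⊕ B → A ⊕ B → ℝ := fun v u =>
    if G.Adj v u then 1 / ((d v : ℝ) * (d u : ℝ)) else 0 with hF
  set xa : A → ℕ := fun a => ∑ b : B,
    (if G.Adj (Sum.inl a) (Sum.inr b) ∧ d (Sum.inr b) = 1 then 1 else 0) with hxa
  set ya : A → ℕ := fun a => ∑ b : B,
    (if G.Adj (Sum.inl a) (Sum.inr b) ∧ d (Sum.inr b) = 2 then 1 else 0) with hya
  set q1 : ℕ := ∑ b : B, (if d (Sum.inr b) = 1 then 1 else 0) with hq1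
  set q2 : ℕ := ∑ b : B, (if d (Sum.inr b) = 2 then 1 else 0) with hq2
  set p : ℕ := Fintype.card A with hp
  have degA : ∀ a : A, d (Sum.inl a) = ∑ b : B, (if G.Adj (Sum.inl a) (Sum.inr b) then 1 else 0) := by
    intro a
    have h1 : d (Sum.inl a) = ∑ u : A ⊕ B, (if G.Adj (Sum.inl a) u then 1 else 0) := by
      simp only [hd, SimpleGraph.degree, SimpleGraph.neighborFinset_eq_filter, Finset.card_filter]
    rw [h1, Fintype.sum_sum_type]
    have h0 : ∀ a' : A, (if G.Adj (Sum.inl a) (Sum.inl a') then (1:ℕ) else 0) = 0 := by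
      intro a'; rw [if_neg (hA a a')]
    rw [Finset.sum_congr rfl (fun a' _ => h0 a')]
    simp
  have degB : ∀ b : B, d (Sum.inr b) = ∑ a : A, (if G.Adj (Sum.inl a) (Sum.inr b) then 1 else 0) := by
    intro b
    have h1 : d (Sum.inr b) = ∑ u : A ⊕ B, (if G.Adj (Sum.inr b) u then 1 else 0) := by
      simp only [hd, SimpleGraph.degree, SimpleGraph.neighborFinset_eq_filter, Finset.card_filter]
    rw [h1, Fintype.sum_sum_type]
    have h0 : ∀ b' : B, (if G.Adj (Sum.inr b) (Sum.inr b') then (1:ℕ) else 0) = 0 := by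
      intro b'; rw [if_neg (hB b b')]
    rw [Finset.sum_congr rfl (fun b' _ => h0 b')]
    have h2 : ∀ a : A, (if G.Adj (Sum.inr b) (Sum.inl a) then (1:ℕ) else 0)
        = (if G.Adj (Sum.inl a) (Sum.inr b) then 1 else 0) := by
      intro a; by_cases h : G.Adj (Sum.inl a) (Sum.inr b)
      · rw [if_pos h.symm, if_pos h]
      · rw [if_neg (fun hc => h hc.symm), if_neg h]
    rw [Finset.sum_congr rfl (fun a _ => h2 a)]
    simp
  have degsplit : ∀ a : A, d (Sum.inl a) = xa a + ya a := by
    intro a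
    rw [degA a, hxa, hya, ← Finset.sum_add_distrib]
    apply Finset.sum_congr rfl
    intro b _
    rcases hdegB b with h1 | h2
    · by_cases h : G.Adj (Sum.inl a) (Sum.inr b) <;> simp [h, hd, h1]
    · by_cases h : G.Adj (Sum.inl a) (Sum.inr b) <;> simp [h, hd, h2]
  have sumxa : ∑ a : A, xa a = q1 := by
    rw [hxa, Finset.sum_comm, hq1]
    apply Finset.sum_congr rfl
    intro b _
    by_cases h1 : d (Sum.inr b) = 1
    · rw [if_pos h1]
      have h3 : ∀ a : A, (if G.Adj (Sum.inl a) (Sum.inr b) ∧ d (Sum.inr b) = 1 then (1:ℕ) else 0)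
          = (if G.Adj (Sum.inl a) (Sum.inr b) then 1 else 0) := by
        intro a; by_cases h : G.Adj (Sum.inl a) (Sum.inr b) <;> simp [h, h1]
      rw [Finset.sum_congr rfl (fun a _ => h3 a), ← degB b, h1]
    · rw [if_neg h1]
      exact Finset.sum_eq_zero (fun a _ => by simp [h1])
  have sumya : ∑ a : A, ya a = 2 * q2 := by
    rw [hya, Finset.sum_comm, hq2, Finset.mul_sum]
    apply Finset.sum_congr rfl
    intro b _
    by_cases h2 : d (Sum.inr b) = 2
    · rw [if_pos h2]
      have h3 : ∀ a : A, (if G.Adj (Sum.inl a) (Sum.inr b) ∧ d (Sum.inr b) = 2 then (1:ℕ) else 0)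
          = (if G.Adj (Sum.inl a) (Sum.inr b) then 1 else 0) := by
        intro a; by_cases h : G.Adj (Sum.inl a) (Sum.inr b) <;> simp [h, h2]
      rw [Finset.sum_congr rfl (fun a _ => h3 a), ← degB b, h2]
      omega
    · rw [if_neg h2]
      exact Finset.sum_eq_zero (fun a _ => by simp [h2])
  have cardB : Fintype.card B = q1 + q2 := by
    rw [hq1, hq2, ← Finset.sum_add_distrib, Fintype.card_eq_sum_ones]
    apply Finset.sum_congr rfl
    intro b _
    rcases hdegB b with h | h <;> simp [hd, h]
  have sumdB : ∑ b : B, d (Sum.inr b) = q1 + 2 * q2 := by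
    rw [hq1, hq2, Finset.mul_sum, ← Finset.sum_add_distrib]
    apply Finset.sum_congr rfl
    intro b _
    rcases hdegB b with h | h <;> simp [hd, h]
  have sumdA : ∑ a : A, d (Sum.inl a) = q1 + 2 * q2 := by
    rw [Finset.sum_congr rfl (fun a _ => degsplit a), Finset.sum_add_distrib, sumxa, sumya]
  have hedge : n ≤ G.edgeFinset.card + 1 := by
    rw [← hn]; exact card_le_card_edgeFinset_add_one G hconn
  have hsumdeg : ∑ v, G.degree v = 2 * G.edgeFinset.card := G.sum_degrees_eq_twice_card_edges
  have hsplitv : ∑ v : A ⊕ B, G.degree v = ∑ a : A, d (Sum.inl a) + ∑ b : B, d (Sum.inr b) :=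
    Fintype.sum_sum_type _
  have hcardn : n = p + (q1 + q2) := by rw [← hn, Fintype.card_sum, cardB, hp]
  have hpq : p ≤ q2 + 1 := by omega
  have hnotbad : ∀ a : A, ¬ (xa a = 1 ∧ ya a = 0) := by
    rintro a ⟨h1, h0⟩
    have hda : d (Sum.inl a) = 1 := by rw [degsplit a, h1, h0]
    have hex : ∃ b : B, G.Adj (Sum.inl a) (Sum.inr b) ∧ d (Sum.inr b) = 1 := by
      by_contra hno
      have : xa a = 0 := by
        rw [hxa]
        exact Finset.sum_eq_zero (fun b _ => if_neg (fun hc => hno ⟨b, hc⟩))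
      omega
    obtain ⟨b, hb, hb1⟩ := hex
    exact no_K2 G hconn (by omega) hb hda hb1
  -- per-vertex bound
  have pera : ∀ a : A, ∑ b : B, F (Sum.inl a) (Sum.inr b) ≤ (2 + (xa a : ℝ)) / 4 := by
    intro a
    have hda : d (Sum.inl a) = xa a + ya a := degsplit a
    have hdapos : 0 < d (Sum.inl a) := hdeg _
    have hdaR : (0:ℝ) < (d (Sum.inl a) : ℝ) := by exact_mod_cast hdapos
    have hsplit : ∀ b : B, F (Sum.inl a) (Sum.inr b)
        = (if G.Adj (Sum.inl a) (Sum.inr b) ∧ d (Sum.inr b) = 1 then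
            (1:ℝ)/(d (Sum.inl a) : ℝ) else 0)
        + (if G.Adj (Sum.inl a) (Sum.inr b) ∧ d (Sum.inr b) = 2 then
            1/(2*(d (Sum.inl a) : ℝ)) else 0) := by
      intro b
      rcases hdegB b with h | h <;> by_cases hab : G.Adj (Sum.inl a) (Sum.inr b) <;>
        simp only [hF, hd, hab, h, if_pos, if_neg, true_and, false_and, if_true, if_false,
          and_true, and_false, Nat.cast_ofNat, Nat.cast_one] <;>
        norm_num <;> ring
    rw [Finset.sum_congr rfl (fun b _ => hsplit b), Finset.sum_add_distrib,
      sum_ite_count _ _, sum_ite_count _ _]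
    have exa : (∑ b : B, if G.Adj (Sum.inl a) (Sum.inr b) ∧ d (Sum.inr b) = 1 then 1 else 0) = xa a := rfl
    have eya : (∑ b : B, if G.Adj (Sum.inl a) (Sum.inr b) ∧ d (Sum.inr b) = 2 then 1 else 0) = ya a := rfl
    rw [exa, eya]
    -- now arithmetic
    have hnat : 4 * xa a + 2 * ya a ≤ (2 + xa a) * (xa a + ya a) :=
      nat_arith_aux _ _ (hnotbad a)
    have hkey : (4 * (xa a : ℝ) + 2 * (ya a : ℝ)) ≤ (2 + (xa a:ℝ)) * ((xa a:ℝ) + (ya a:ℝ)) := by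
      exact_mod_cast hnat
    have hdval : (d (Sum.inl a) : ℝ) = (xa a : ℝ) + (ya a : ℝ) := by exact_mod_cast hda
    rw [hdval] at hdaR ⊢
    exact real_arith_aux _ _ hdaR hkey
  -- trace as a double sum
  have htr : (randicMatrix G * randicMatrix G).trace = ∑ v, ∑ u, F v u := by
    simp only [Matrix.trace, Matrix.diag, Matrix.mul_apply]
    apply Finset.sum_congr rfl
    intro v _
    apply Finset.sum_congr rfl
    intro u _
    by_cases h : G.Adj v u
    · simp only [hF, hd, randicMatrix, if_pos h, if_pos h.symm]
      rw [show ((G.degree u:ℝ)) * ((G.degree v:ℝ)) = ((G.degree v:ℝ)) * ((G.degree u:ℝ)) from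
        mul_comm _ _, div_mul_div_comm, one_mul, Real.mul_self_sqrt (by positivity)]
    · simp [hF, randicMatrix, h]
  have hsplitsum : ∑ v, ∑ u, F v u = 2 * ∑ a : A, ∑ b : B, F (Sum.inl a) (Sum.inr b) := by
    rw [Fintype.sum_sum_type]
    have e1 : ∀ a : A, (∑ u, F (Sum.inl a) u) = ∑ b : B, F (Sum.inl a) (Sum.inr b) := by
      intro a
      rw [Fintype.sum_sum_type]
      have h0 : ∀ a' : A, F (Sum.inl a) (Sum.inl a') = 0 := by
        intro a'; simp [hF, hA a a']
      rw [Finset.sum_congr rfl (fun a' _ => h0 a'), Finset.sum_const_zero, zero_add]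
    have e2 : ∀ b : B, (∑ u, F (Sum.inr b) u) = ∑ a : A, F (Sum.inl a) (Sum.inr b) := by
      intro b
      rw [Fintype.sum_sum_type]
      have h0 : ∀ b' : B, F (Sum.inr b) (Sum.inr b') = 0 := by
        intro b'; simp [hF, hB b b']
      have h1 : ∀ a : A, F (Sum.inr b) (Sum.inl a) = F (Sum.inl a) (Sum.inr b) := by
        intro a
        by_cases h : G.Adj (Sum.inl a) (Sum.inr b)
        · simp only [hF, if_pos h.symm, if_pos h]; rw [mul_comm]
        · have h2' : ¬ G.Adj (Sum.inr b) (Sum.inl a) := fun hc => h hc.symm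
          simp only [hF, if_neg h2', if_neg h]
      rw [Finset.sum_congr rfl (fun b' _ => h0 b'), Finset.sum_const_zero, add_zero,
        Finset.sum_congr rfl (fun a _ => h1 a)]
    rw [Finset.sum_congr rfl (fun a _ => e1 a), Finset.sum_congr rfl (fun b _ => e2 b),
      Finset.sum_comm]
    ring
  rw [htr, hsplitsum]
  have hT : ∑ a : A, ∑ b : B, F (Sum.inl a) (Sum.inr b) ≤ ((n:ℝ) + 1)/4 := by
    calc ∑ a : A, ∑ b : B, F (Sum.inl a) (Sum.inr b)
        ≤ ∑ a : A, (2 + (xa a : ℝ)) / 4 := Finset.sum_le_sum (fun a _ => pera a)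
      _ = (2 * (p:ℝ) + (q1:ℝ)) / 4 := by
          rw [← Finset.sum_div]
          congr 1
          rw [Finset.sum_add_distrib, Finset.sum_const, ← Nat.cast_sum _ _, sumxa]
          simp [hp, Finset.card_univ]
          ring
      _ ≤ ((n:ℝ) + 1)/4 := by
          have : (2 * p + q1 : ℕ) ≤ n + 1 := by omega
          have := (Nat.cast_le (α := ℝ)).mpr this
          push_cast at this
          linarith
  linarith [hT]
theorem TB_energy_bound {A B : Type*} [Fintype A] [Fintype B]
    (G : SimpleGraph (A ⊕ B)) [DecidableRel G.Adj] (n : ℕ)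
    (hn : Fintype.card (A ⊕ B) = n) (hn3 : 3 ≤ n)
    (hconn : G.Connected)
    (hA : ∀ a a' : A, ¬ G.Adj (Sum.inl a) (Sum.inl a'))
    (hB : ∀ b b' : B, ¬ G.Adj (Sum.inr b) (Sum.inr b'))
    (hdegB : ∀ b : B, G.degree (Sum.inr b) = 1 ∨ G.degree (Sum.inr b) = 2)
    (hR : (randicMatrix G).IsHermitian)
    (hnull : 1 ≤ (Finset.univ.filter fun i => hR.eigenvalues i = 0).card) :
    ∑ i, |hR.eigenvalues i| ≤ ((n : ℝ) - 3) * Real.sqrt 2 / 2 + 2 := by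
  classical
  have hcard2 : 2 ≤ Fintype.card (A ⊕ B) := by omega
  have hdeg : ∀ v, 0 < G.degree v := by
    intro v
    rw [SimpleGraph.degree_pos_iff_exists_adj]
    exact exists_adj_of_connected G hconn hcard2 v
  have hne : Nonempty (A ⊕ B) := Fintype.card_pos_iff.mp (by omega)
  obtain ⟨v₀⟩ := hne
  -- eigenvalue 1
  have hx0 : (fun v : A ⊕ B => Real.sqrt (G.degree v)) ≠ 0 := by
    intro hcon
    have h1 : Real.sqrt (G.degree v₀) = 0 := congrFun hcon v₀
    have h2 : (0:ℝ) < G.degree v₀ := by exact_mod_cast hdeg v₀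
    have := Real.sqrt_pos.mpr h2
    linarith
  obtain ⟨i1, hi1⟩ := exists_eigenvalue_eq hR hx0 (randic_mulVec_one G hdeg)
  -- eigenvalue -1
  have hy0 : (Sum.elim (fun a : A => Real.sqrt (G.degree (Sum.inl a)))
      (fun b : B => - Real.sqrt (G.degree (Sum.inr b)))) ≠ 0 := by
    intro hcon
    cases v₀ with
    | inl a =>
      have h1 : Real.sqrt (G.degree (Sum.inl a)) = 0 := congrFun hcon (Sum.inl a)
      have h2 : (0:ℝ) < G.degree (Sum.inl a) := by exact_mod_cast hdeg (Sum.inl a)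
      have := Real.sqrt_pos.mpr h2
      linarith
    | inr b =>
      have h1 : - Real.sqrt (G.degree (Sum.inr b)) = 0 := congrFun hcon (Sum.inr b)
      have h2 : (0:ℝ) < G.degree (Sum.inr b) := by exact_mod_cast hdeg (Sum.inr b)
      have := Real.sqrt_pos.mpr h2
      linarith
  obtain ⟨i2, hi2⟩ := exists_eigenvalue_eq hR hy0 (randic_mulVec_neg_one G hA hB hdeg)
  -- eigenvalue 0
  obtain ⟨i0, hi0mem⟩ := Finset.card_pos.mp (by omega : 0 < (Finset.univ.filter
    fun i => hR.eigenvalues i = 0).card)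
  have hi0 : hR.eigenvalues i0 = 0 := (Finset.mem_filter.mp hi0mem).2
  set lam : A ⊕ B → ℝ := hR.eigenvalues with hlam
  have h01 : i0 ≠ i1 := fun h => by rw [h, hi1] at hi0; norm_num at hi0
  have h02 : i0 ≠ i2 := fun h => by rw [h, hi2] at hi0; norm_num at hi0
  have h12 : i1 ≠ i2 := fun h => by rw [h, hi2] at hi1; norm_num at hi1
  set t : Finset (A ⊕ B) := {i0, i1, i2} with ht
  have hcardt : t.card = 3 := by
    rw [ht]
    rw [Finset.card_insert_of_notMem (by simp [h01, h02]),
      Finset.card_insert_of_notMem (by simp [h12]), Finset.card_singleton]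
  have hsub : t ⊆ Finset.univ := Finset.subset_univ t
  -- trace bound
  have htrace : ∑ i, lam i ^ 2 ≤ ((n:ℝ) + 1) / 2 := by
    rw [hlam, ← trace_sq_eq_sum_eigen hR]
    exact randic_trace_bound G n hn hn3 hconn hA hB hdegB
  have hsumt_abs : ∑ i ∈ t, |lam i| = 2 := by
    rw [ht, Finset.sum_insert (by simp [h01, h02]), Finset.sum_insert (by simp [h12]),
      Finset.sum_singleton, hi0, hi1, hi2]
    norm_num
  have hsumt_sq : ∑ i ∈ t, lam i ^ 2 = 2 := by
    rw [ht, Finset.sum_insert (by simp [h01, h02]), Finset.sum_insert (by simp [h12]),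
      Finset.sum_singleton, hi0, hi1, hi2]
    norm_num
  set s : Finset (A ⊕ B) := Finset.univ \ t with hs
  have hsplit_abs : ∑ i, |lam i| = ∑ i ∈ s, |lam i| + 2 := by
    rw [← hsumt_abs, hs]
    exact (Finset.sum_sdiff hsub).symm
  have hsplit_sq : ∑ i ∈ s, lam i ^ 2 + 2 = ∑ i, lam i ^ 2 := by
    rw [← hsumt_sq, hs]
    exact Finset.sum_sdiff hsub
  have hcards : (s.card : ℝ) = (n:ℝ) - 3 := by
    rw [hs, Finset.card_sdiff_of_subset hsub, Finset.card_univ, hn, hcardt]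
    have : (3:ℕ) ≤ n := hn3
    push_cast [Nat.cast_sub this]
    ring
  have hn3R : (3:ℝ) ≤ (n:ℝ) := by exact_mod_cast hn3
  have hssq : ∑ i ∈ s, lam i ^ 2 ≤ ((n:ℝ) - 3) / 2 := by
    have := hsplit_sq
    linarith [htrace]
  have hcheb : (∑ i ∈ s, |lam i|) ^ 2 ≤ (s.card : ℝ) * ∑ i ∈ s, |lam i| ^ 2 :=
    sq_sum_le_card_mul_sum_sq
  have habs_sq : ∑ i ∈ s, |lam i| ^ 2 = ∑ i ∈ s, lam i ^ 2 :=
    Finset.sum_congr rfl (fun i _ => sq_abs _)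
  have hkey : (∑ i ∈ s, |lam i|) ^ 2 ≤ (((n:ℝ) - 3) * Real.sqrt 2 / 2) ^ 2 := by
    have h2 : (((n:ℝ) - 3) * Real.sqrt 2 / 2) ^ 2 = ((n:ℝ) - 3)^2 / 2 := by
      rw [div_pow, mul_pow, Real.sq_sqrt (by norm_num : (0:ℝ) ≤ 2)]
      ring
    rw [h2]
    calc (∑ i ∈ s, |lam i|) ^ 2 ≤ (s.card : ℝ) * ∑ i ∈ s, lam i ^ 2 := by
          rw [← habs_sq]; exact hcheb
      _ ≤ ((n:ℝ) - 3) * (((n:ℝ) - 3) / 2) := by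
          apply mul_le_mul (le_of_eq hcards) hssq
          · positivity
          · linarith
      _ = ((n:ℝ) - 3)^2 / 2 := by ring
  have habs_nonneg : 0 ≤ ∑ i ∈ s, |lam i| := Finset.sum_nonneg (fun i _ => abs_nonneg _)
  have hrhs_nonneg : 0 ≤ ((n:ℝ) - 3) * Real.sqrt 2 / 2 := by
    apply div_nonneg _ (by norm_num)
    apply mul_nonneg (by linarith) (Real.sqrt_nonneg _)
  have hfinal : ∑ i ∈ s, |lam i| ≤ ((n:ℝ) - 3) * Real.sqrt 2 / 2 :=
    (pow_le_pow_iff_left₀ habs_nonneg hrhs_nonneg (by norm_num)).mp hkey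
  rw [hsplit_abs]
  linarith
end
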